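/- Fix d ≥ 1 and work in ℝ^{d+1}. Let X = { x ∈ ℝ^{d+1} : ∑_{j=1}^{d+1} x_j² = 1 and x_d ≥ 0 }. For angles θ = (θ_1,…,θ_d) define g(θ) = (0,…,0,1) · G_{d+1,d}(θ_d) G_{d,d−1}(θ_{d−1}) ⋯ G_{3,2}(θ_2) G_{2,1}(θ_1), and let Θ be the set of angle tuples with 0 ≤ θ_1 ≤ π and −π/2 < θ_j ≤ π/2 for 2 ≤ j ≤ d. Then the map θ ↦ g(θ) restricted to Θ is one-to-one over the set of x ∈ X with x_1 ≠ 0: if θ, θ' ∈ Θ satisfy g(θ) = g(θ') = x with x_1 ≠ 0, then θ = θ'. -/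

import Mathlib

open Matrix

/-- The `m × m` Givens rotation `G_{j,k}(θ)` (indices written 0-based here): the identity
except that the `(j,j)` and `(k,k)` entries equal `cos θ`, the `(j,k)` entry equals `sin θ`
and the `(k,j)` entry equals `-sin θ`. -/
noncomputable def givens (m : ℕ) (j k : ℕ) (θ : ℝ) : Matrix (Fin m) (Fin m) ℝ :=
  Matrix.of fun a b =>
    if (a : ℕ) = j ∧ (b : ℕ) = j then Real.cos θ
    else if (a : ℕ) = k ∧ (b : ℕ) = k then Real.cos θ
    else if (a : ℕ) = j ∧ (b : ℕ) = k then Real.sin θ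
    else if (a : ℕ) = k ∧ (b : ℕ) = j then -Real.sin θ
    else if a = b then 1 else 0

/-- `g(θ) = (0,…,0,1) ⬝ G_{d+1,d}(θ_d) G_{d,d-1}(θ_{d-1}) ⋯ G_{2,1}(θ_1)` in `ℝ^{d+1}`
(the `θ` are indexed 1-based; the Givens coordinate pairs are written 0-based). -/
noncomputable def gMap (d : ℕ) (θ : ℕ → ℝ) : Fin (d + 1) → ℝ :=
  Matrix.vecMul (Pi.single (Fin.last d) 1)
    (((List.range d).reverse.map fun i => givens (d + 1) (i + 1) i (θ (i + 1))).prod)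

open Finset Real

private lemma givens_row_id {m : ℕ} (j k : ℕ) (t : ℝ) (a : Fin m)
    (h1 : (a : ℕ) ≠ j) (h2 : (a : ℕ) ≠ k) :
    givens m j k t a = Pi.single a 1 := by
  funext b
  simp only [givens, Matrix.of_apply, Pi.single_apply]
  rw [if_neg (fun h => h1 h.1), if_neg (fun h => h2 h.1), if_neg (fun h => h1 h.1),
    if_neg (fun h => h2 h.1)]
  simp [eq_comm]

private lemma prodRow (d : ℕ) (θ : ℕ → ℝ) : ∀ (n : ℕ) (m : Fin (d + 1)), n < (m : ℕ) →
    Pi.single m 1 ᵥ*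
      (((List.range n).reverse.map fun i => givens (d + 1) (i + 1) i (θ (i + 1))).prod)
      = Pi.single m 1 := by
  intro n
  induction n with
  | zero => intro m _; simp [Matrix.vecMul_one]
  | succ n ih =>
      intro m hm
      rw [List.range_succ, List.reverse_append, List.reverse_singleton,
        List.singleton_append, List.map_cons, List.prod_cons, ← Matrix.vecMul_vecMul,
        Matrix.single_one_vecMul, Matrix.row, givens_row_id (n + 1) n _ m (by omega) (by omega)]
      exact ih m (by omega)

private lemma vecMul_givens_prod (d : ℕ) (θ : ℕ → ℝ) :
    ∀ n, ∀ hn : n ≤ d, ∀ k : Fin (d + 1),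
    (Pi.single (⟨n, by omega⟩ : Fin (d + 1)) 1 ᵥ*
      (((List.range n).reverse.map fun i => givens (d + 1) (i + 1) i (θ (i + 1))).prod)) k =
      if (k : ℕ) = 0 ∧ n ≠ 0 then ∏ j ∈ Icc 1 n, sin (θ j)
      else if 1 ≤ (k : ℕ) ∧ (k : ℕ) ≤ n then
        cos (θ (k : ℕ)) * ∏ j ∈ Icc ((k : ℕ) + 1) n, sin (θ j)
      else if (k : ℕ) = n then 1 else 0 := by
  intro n
  induction n with
  | zero =>
      intro _ k
      simp only [List.range_zero, List.reverse_nil, List.map_nil, List.prod_nil,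
        Matrix.vecMul_one, Pi.single_apply, Fin.ext_iff]
      by_cases h : (k : ℕ) = 0 <;> simp [h]
  | succ n ih =>
      intro hn k
      have hn' : n ≤ d := by omega
      rw [List.range_succ, List.reverse_append, List.reverse_singleton,
        List.singleton_append, List.map_cons, List.prod_cons, ← Matrix.vecMul_vecMul]
      have hrow : (Pi.single (⟨n + 1, by omega⟩ : Fin (d + 1)) (1 : ℝ)) ᵥ*
          givens (d + 1) (n + 1) n (θ (n + 1)) =
          Pi.single (⟨n + 1, by omega⟩ : Fin (d + 1)) (cos (θ (n + 1))) +
          Pi.single (⟨n, by omega⟩ : Fin (d + 1)) (sin (θ (n + 1))) := by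
        rw [Matrix.single_one_vecMul, Matrix.row]
        funext b
        simp only [givens, Matrix.of_apply, Pi.add_apply, Pi.single_apply, Fin.ext_iff]
        by_cases hb : (b : ℕ) = n + 1 <;> by_cases hb' : (b : ℕ) = n <;>
          simp_all <;> omega
      rw [hrow, Matrix.add_vecMul]
      have h1 : (((List.range n).reverse.map fun i =>
          givens (d + 1) (i + 1) i (θ (i + 1))).prod) ⟨n + 1, by omega⟩ =
          Pi.single (⟨n + 1, by omega⟩ : Fin (d + 1)) 1 :=
        (Matrix.single_one_vecMul _ _).symm.trans
          (prodRow d θ n ⟨n + 1, by omega⟩ (Nat.lt_succ_self n))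
      have h2 : (((List.range n).reverse.map fun i =>
          givens (d + 1) (i + 1) i (θ (i + 1))).prod) ⟨n, by omega⟩ k =
          (if (k : ℕ) = 0 ∧ n ≠ 0 then ∏ j ∈ Icc 1 n, sin (θ j)
          else if 1 ≤ (k : ℕ) ∧ (k : ℕ) ≤ n then
            cos (θ (k : ℕ)) * ∏ j ∈ Icc ((k : ℕ) + 1) n, sin (θ j)
          else if (k : ℕ) = n then 1 else 0) :=
        (congrFun (Matrix.single_one_vecMul _ _).symm k).trans (ih hn' k)
      simp only [Pi.add_apply, Matrix.single_vecMul, Matrix.row, Pi.smul_apply]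
      rw [h1, h2]
      have hsk : (Pi.single (⟨n + 1, by omega⟩ : Fin (d + 1)) (1 : ℝ) : Fin (d + 1) → ℝ) k =
          if (k : ℕ) = n + 1 then 1 else 0 := by
        simp [Pi.single_apply, Fin.ext_iff, eq_comm]
      rw [hsk]
      by_cases h0 : (k : ℕ) = 0
      · have hne : (0 : ℕ) ≠ n + 1 := by omega
        simp only [h0, hne, if_false, if_true, true_and,
          Nat.succ_ne_zero, ne_eq, not_false_eq_true]
        rw [Finset.prod_Icc_succ_top (by omega)]
        by_cases hn0 : n = 0
        · subst hn0; simp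
        · simp [hn0]; ring
      · by_cases hk : (k : ℕ) ≤ n
        · have h1k : 1 ≤ (k : ℕ) := by omega
          have hkn1 : (k : ℕ) ≠ n + 1 := by omega
          simp only [h0, false_and, if_false, h1k, hk, and_true, true_and, hkn1,
            show (k:ℕ) ≤ n + 1 from by omega, if_true]
          rw [Finset.prod_Icc_succ_top (by omega)]
          ring
        · by_cases hk1 : (k : ℕ) = n + 1
          · simp only [h0, false_and, if_false, hk1, if_true,
              show ¬ ((k:ℕ) ≤ n) from hk, and_false, le_refl, and_true,
              show 1 ≤ n + 1 from by omega, true_and, Nat.succ_ne_self]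
            rw [show Finset.Icc (n + 1 + 1) (n + 1) = ∅ from Finset.Icc_eq_empty (by omega)]
            simp
          · simp only [h0, false_and, if_false, hk, and_false, hk1,
              show ¬ ((k:ℕ) ≤ n + 1) from by omega, and_false,
              show (k:ℕ) ≠ n from by omega]
            simp

private lemma gMap_apply (d : ℕ) (θ : ℕ → ℝ) (k : Fin (d + 1)) :
    gMap d θ k =
      if (k : ℕ) = 0 ∧ d ≠ 0 then ∏ j ∈ Icc 1 d, sin (θ j)
      else if 1 ≤ (k : ℕ) ∧ (k : ℕ) ≤ d then
        cos (θ (k : ℕ)) * ∏ j ∈ Icc ((k : ℕ) + 1) d, sin (θ j)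
      else if (k : ℕ) = d then 1 else 0 := by
  have h := vecMul_givens_prod d θ d le_rfl k
  have : (Fin.last d) = (⟨d, by omega⟩ : Fin (d + 1)) := rfl
  rw [gMap, this]
  exact h

/-- The Givens-angle parameterization restricted to
`Θ = {θ : θ_1 ∈ [0,π], θ_j ∈ (-π/2, π/2] for 2 ≤ j ≤ d}` is one-to-one over the
`x ∈ X` with `x_1 ≠ 0`: if `g(θ) = g(θ') = x` for `θ, θ' ∈ Θ` with `x 0 ≠ 0`, then the
angles agree. -/
theorem givens_param_one_to_one (d : ℕ) (hd : 1 ≤ d)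
    (x : Fin (d + 1) → ℝ)
    (hnorm : ∑ j, x j ^ 2 = 1)
    (hxd : 0 ≤ x ⟨d - 1, by omega⟩)
    (hx1 : x 0 ≠ 0)
    (θ θ' : ℕ → ℝ)
    (hθ1 : 0 ≤ θ 1 ∧ θ 1 ≤ Real.pi)
    (hθj : ∀ j : ℕ, 2 ≤ j → j ≤ d → -(Real.pi / 2) < θ j ∧ θ j ≤ Real.pi / 2)
    (hθ'1 : 0 ≤ θ' 1 ∧ θ' 1 ≤ Real.pi)
    (hθ'j : ∀ j : ℕ, 2 ≤ j → j ≤ d → -(Real.pi / 2) < θ' j ∧ θ' j ≤ Real.pi / 2)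
    (hgθ : gMap d θ = x) (hgθ' : gMap d θ' = x) :
    ∀ j : ℕ, 1 ≤ j → j ≤ d → θ j = θ' j := by
  classical
  set S : ℕ → ℝ := fun j => ∏ i ∈ Icc j d, sin (θ i) with hS
  set S' : ℕ → ℝ := fun j => ∏ i ∈ Icc j d, sin (θ' i) with hS'
  -- x 0 in terms of θ
  have hx0 : x 0 = S 1 := by
    rw [← hgθ, gMap_apply]
    simp [show ((0 : Fin (d+1)) : ℕ) = 0 from rfl, Nat.one_le_iff_ne_zero.mp hd, hS]
  have hx0' : x 0 = S' 1 := by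
    rw [← hgθ', gMap_apply]
    simp [show ((0 : Fin (d+1)) : ℕ) = 0 from rfl, Nat.one_le_iff_ne_zero.mp hd, hS']
  have hxk : ∀ j : ℕ, 1 ≤ j → ∀ h2 : j ≤ d,
      x ⟨j, by omega⟩ = cos (θ j) * S (j + 1) := by
    intro j h1 h2
    rw [← hgθ, gMap_apply]
    simp only [show ((⟨j, by omega⟩ : Fin (d+1)) : ℕ) = j from rfl]
    rw [if_neg (by omega), if_pos ⟨h1, h2⟩]
  have hxk' : ∀ j : ℕ, 1 ≤ j → ∀ h2 : j ≤ d,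
      x ⟨j, by omega⟩ = cos (θ' j) * S' (j + 1) := by
    intro j h1 h2
    rw [← hgθ', gMap_apply]
    simp only [show ((⟨j, by omega⟩ : Fin (d+1)) : ℕ) = j from rfl]
    rw [if_neg (by omega), if_pos ⟨h1, h2⟩]
  -- recursion for S
  have hins : ∀ j : ℕ, 1 ≤ j → j ≤ d → Finset.Icc j d = insert j (Finset.Icc (j+1) d) := by
    intro j h1 h2; ext a; simp; omega
  have hSrec : ∀ j : ℕ, 1 ≤ j → j ≤ d → S j = sin (θ j) * S (j + 1) := by
    intro j h1 h2
    rw [hS]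
    simp only
    rw [hins j h1 h2, Finset.prod_insert (by simp)]
  have hSrec' : ∀ j : ℕ, 1 ≤ j → j ≤ d → S' j = sin (θ' j) * S' (j + 1) := by
    intro j h1 h2
    rw [hS']
    simp only
    rw [hins j h1 h2, Finset.prod_insert (by simp)]
  -- nonvanishing of the sines
  have hsne : ∀ i ∈ Finset.Icc 1 d, sin (θ i) ≠ 0 := by
    have : S 1 ≠ 0 := hx0 ▸ hx1
    exact Finset.prod_ne_zero_iff.mp this
  have hsne' : ∀ i ∈ Finset.Icc 1 d, sin (θ' i) ≠ 0 := by
    have : S' 1 ≠ 0 := hx0' ▸ hx1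
    exact Finset.prod_ne_zero_iff.mp this
  have hSne : ∀ j : ℕ, 1 ≤ j → S j ≠ 0 := by
    intro j h1
    refine Finset.prod_ne_zero_iff.mpr fun i hi => ?_
    simp only [Finset.mem_Icc] at hi
    exact hsne i (Finset.mem_Icc.mpr ⟨by omega, hi.2⟩)
  have hSne' : ∀ j : ℕ, 1 ≤ j → S' j ≠ 0 := by
    intro j h1
    refine Finset.prod_ne_zero_iff.mpr fun i hi => ?_
    simp only [Finset.mem_Icc] at hi
    exact hsne' i (Finset.mem_Icc.mpr ⟨by omega, hi.2⟩)
  -- squares agree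
  have hsq : ∀ j : ℕ, 1 ≤ j → j ≤ d + 1 → S j ^ 2 = S' j ^ 2 := by
    intro j h1
    induction j with
    | zero => omega
    | succ n ihn =>
        intro hn
        by_cases hn0 : n = 0
        · subst hn0
          rw [← hx0, ← hx0']
        · have h1n : 1 ≤ n := by omega
          have hnd : n ≤ d := by omega
          have e1 : S n ^ 2 + (x ⟨n, by omega⟩) ^ 2 = S (n + 1) ^ 2 := by
            rw [hSrec n h1n hnd, hxk n h1n hnd]
            linear_combination (S (n + 1)) ^ 2 * Real.sin_sq_add_cos_sq (θ n)
          have e2 : S' n ^ 2 + (x ⟨n, by omega⟩) ^ 2 = S' (n + 1) ^ 2 := by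
            rw [hSrec' n h1n hnd, hxk' n h1n hnd]
            linear_combination (S' (n + 1)) ^ 2 * Real.sin_sq_add_cos_sq (θ' n)
          have := ihn h1n (by omega)
          linarith
  -- base case: θ 1 = θ' 1 and S 2 = S' 2
  have base : θ 1 = θ' 1 ∧ S 2 = S' 2 := by
    have hs1pos : 0 < sin (θ 1) := by
      rcases lt_or_eq_of_le (Real.sin_nonneg_of_nonneg_of_le_pi hθ1.1 hθ1.2) with h | h
      · exact h
      · exact absurd h.symm (hsne 1 (Finset.mem_Icc.mpr ⟨le_refl 1, hd⟩))
    have hs1pos' : 0 < sin (θ' 1) := by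
      rcases lt_or_eq_of_le (Real.sin_nonneg_of_nonneg_of_le_pi hθ'1.1 hθ'1.2) with h | h
      · exact h
      · exact absurd h.symm (hsne' 1 (Finset.mem_Icc.mpr ⟨le_refl 1, hd⟩))
    have e1 : sin (θ 1) * S 2 = sin (θ' 1) * S' 2 := by
      rw [← hSrec 1 le_rfl hd, ← hSrec' 1 le_rfl hd, ← hx0, ← hx0']
    have e2 : S 2 ^ 2 = S' 2 ^ 2 := hsq 2 (by omega) (by omega)
    have hS2ne : S 2 ≠ 0 := hSne 2 (by omega)
    have hS2ne' : S' 2 ≠ 0 := hSne' 2 (by omega)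
    have hsin : sin (θ 1) = sin (θ' 1) := by
      have : sin (θ 1) ^ 2 * S 2 ^ 2 = sin (θ' 1) ^ 2 * S' 2 ^ 2 := by
        linear_combination (sin (θ 1) * S 2 + sin (θ' 1) * S' 2) * e1
      rw [e2] at this
      have h2 : sin (θ 1) ^ 2 = sin (θ' 1) ^ 2 :=
        mul_right_cancel₀ (pow_ne_zero 2 hS2ne') this
      nlinarith
    have hS2 : S 2 = S' 2 := by
      rw [hsin] at e1
      exact mul_left_cancel₀ (by positivity) e1
    have hcos : cos (θ 1) = cos (θ' 1) := by
      have e3 : cos (θ 1) * S 2 = cos (θ' 1) * S' 2 := by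
        rw [← hxk 1 le_rfl hd, ← hxk' 1 le_rfl hd]
      rw [← hS2] at e3
      exact mul_right_cancel₀ hS2ne e3
    exact ⟨Real.injOn_cos ⟨hθ1.1, hθ1.2⟩ ⟨hθ'1.1, hθ'1.2⟩ hcos, hS2⟩
  -- inductive step
  have main : ∀ j : ℕ, 1 ≤ j → j ≤ d → θ j = θ' j ∧ S (j + 1) = S' (j + 1) := by
    intro j h1
    induction j with
    | zero => omega
    | succ n ihn =>
        intro hnd
        by_cases hn0 : n = 0
        · subst hn0; exact base
        · have h1n : 1 ≤ n := by omega
          have hnd' : n ≤ d := by omega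
          obtain ⟨_, hSn⟩ := ihn h1n hnd'
          set m := n + 1 with hm
          have h2m : 2 ≤ m := by omega
          have hmd : m ≤ d := hnd
          obtain ⟨hθm1, hθm2⟩ := hθj m h2m hmd
          obtain ⟨hθ'm1, hθ'm2⟩ := hθ'j m h2m hmd
          have hane : S (m + 1) ≠ 0 := hSne (m + 1) (by omega)
          have ha'ne : S' (m + 1) ≠ 0 := hSne' (m + 1) (by omega)
          have ha2 : S (m + 1) ^ 2 = S' (m + 1) ^ 2 := hsq (m + 1) (by omega) (by omega)
          have heq1 : sin (θ m) * S (m + 1) = sin (θ' m) * S' (m + 1) := by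
            rw [← hSrec m (by omega) hmd, ← hSrec' m (by omega) hmd, hSn]
          have heq2 : cos (θ m) * S (m + 1) = cos (θ' m) * S' (m + 1) := by
            rw [← hxk m (by omega) hmd, ← hxk' m (by omega) hmd]
          have hcase : S' (m + 1) = S (m + 1) ∨ S' (m + 1) = -S (m + 1) := by
            have : (S' (m + 1) - S (m + 1)) * (S' (m + 1) + S (m + 1)) = 0 := by
              linear_combination -ha2
            rcases mul_eq_zero.mp this with h | h
            · left; linarith
            · right; linarith
          rcases hcase with h | h
          · rw [h] at heq1 heq2
            have hsin : sin (θ m) = sin (θ' m) := mul_right_cancel₀ hane heq1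
            refine ⟨Real.injOn_sin ⟨le_of_lt hθm1, hθm2⟩ ⟨le_of_lt hθ'm1, hθ'm2⟩ hsin, h.symm⟩
          · exfalso
            rw [h] at heq1 heq2
            have hcos : cos (θ m) = -cos (θ' m) := by
              have := mul_right_cancel₀ hane (by linarith [heq2] : cos (θ m) * S (m + 1) =
                (-cos (θ' m)) * S (m + 1))
              exact this
            have hc1 : 0 ≤ cos (θ m) := Real.cos_nonneg_of_mem_Icc ⟨le_of_lt hθm1, hθm2⟩
            have hc2 : 0 ≤ cos (θ' m) := Real.cos_nonneg_of_mem_Icc ⟨le_of_lt hθ'm1, hθ'm2⟩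
            have hcz : cos (θ m) = 0 := by linarith
            have hcz' : cos (θ' m) = 0 := by linarith
            have hpi : θ m = Real.pi / 2 := by
              rcases lt_or_eq_of_le hθm2 with hlt | he
              · exact absurd hcz (ne_of_gt (Real.cos_pos_of_mem_Ioo ⟨hθm1, hlt⟩))
              · exact he
            have hpi' : θ' m = Real.pi / 2 := by
              rcases lt_or_eq_of_le hθ'm2 with hlt | he
              · exact absurd hcz' (ne_of_gt (Real.cos_pos_of_mem_Ioo ⟨hθ'm1, hlt⟩))
              · exact he
            rw [hpi, hpi', Real.sin_pi_div_two] at heq1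
            simp at heq1
            exact hane (by linarith)
  intro j hj1 hjd
  exact (main j hj1 hjd).1
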